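/- There exists a nonempty perfect subset of ℝ that is linearly independent over ℚ. -/

import Mathlib

namespace Stmt2
open Finset

def val (σ : ℕ → Bool) (n : ℕ) : ℕ := ∑ k ∈ Finset.range (n+1), (bif σ k then 2^k else 0)

def pos (σ : ℕ → Bool) (n : ℕ) : ℕ := (val σ n + 1) * 2^((n+1)^2)

lemma val_succ (σ : ℕ → Bool) (n : ℕ) :
    val σ (n+1) = val σ n + (bif σ (n+1) then 2^(n+1) else 0) := Finset.sum_range_succ _ _

lemma val_lt (σ : ℕ → Bool) (n : ℕ) : val σ n < 2^(n+1) := by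
  induction n with
  | zero => simp [val]; cases σ 0 <;> simp
  | succ n ih =>
    rw [val_succ]
    have : (2:ℕ)^(n+2) = 2^(n+1) + 2^(n+1) := by ring
    cases σ (n+1) <;> simp <;> omega

lemma val_inj {σ τ : ℕ → Bool} {n : ℕ} (h : val σ n = val τ n) : ∀ k ≤ n, σ k = τ k := by
  induction n with
  | zero =>
    intro k hk
    interval_cases k
    simp only [val, Finset.sum_range_one] at h
    cases hσ : σ 0 <;> cases hτ : τ 0 <;> simp [hσ, hτ] at h ⊢
  | succ n ih =>
    have hs := val_lt σ n
    have ht := val_lt τ n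
    rw [val_succ, val_succ] at h
    have heq : val σ n = val τ n ∧ σ (n+1) = τ (n+1) := by
      cases hσ : σ (n+1) <;> cases hτ : τ (n+1) <;> simp [hσ, hτ] at h ⊢ <;> omega
    intro k hk
    rcases Nat.lt_or_ge k (n+1) with hlt | hge
    · exact ih heq.1 k (Nat.lt_succ_iff.mp hlt)
    · have : k = n + 1 := le_antisymm hk hge
      rw [this]; exact heq.2

lemma pos_lower (σ : ℕ → Bool) (n : ℕ) : 2^((n+1)^2) ≤ pos σ n :=
  Nat.le_mul_of_pos_left _ (Nat.succ_pos _)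

lemma pos_upper (σ : ℕ → Bool) (n : ℕ) : pos σ n ≤ 2^((n+1)^2 + (n+1)) := by
  have : val σ n + 1 ≤ 2^(n+1) := val_lt σ n
  calc pos σ n ≤ 2^(n+1) * 2^((n+1)^2) := Nat.mul_le_mul_right _ this
  _ = 2^((n+1)^2 + (n+1)) := by rw [← pow_add]; ring_nf

lemma exp_ineq {m n : ℕ} (h : m < n) : (m+1)^2 + (m+1) < (n+1)^2 := by nlinarith

lemma pos_cross {σ τ : ℕ → Bool} {m n : ℕ} (h : m < n) : pos σ m < pos τ n :=
  lt_of_le_of_lt (pos_upper σ m)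
    (lt_of_lt_of_le (Nat.pow_lt_pow_right one_lt_two (exp_ineq h)) (pos_lower τ n))

lemma pos_strictMono (σ : ℕ → Bool) : StrictMono (pos σ) := fun _ _ h => pos_cross h

lemma pos_same_level_ne {σ τ : ℕ → Bool} {n : ℕ} (h : val σ n ≠ val τ n) :
    pos σ n ≠ pos τ n := by
  simp only [pos, ne_eq]
  intro hc
  exact h (by
    have := Nat.eq_of_mul_eq_mul_right (Nat.pow_pos two_pos) hc
    omega)

/-- Gap lemma: distinct positions at levels ≥ K differ by at least 2^((K+1)^2). -/
lemma pos_gap {σ τ : ℕ → Bool} {m n K : ℕ} (hm : K ≤ m) (hn : K ≤ n)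
    (hne : pos σ m ≠ pos τ n) (hlt : pos σ m < pos τ n) :
    pos σ m + 2^((K+1)^2) ≤ pos τ n := by
  rcases Nat.lt_trichotomy m n with h | h | h
  · -- cross level: pos τ n ≥ 2 * pos σ m bound
    have h1 : pos σ m ≤ 2^((m+1)^2 + (m+1)) := pos_upper σ m
    have h2 : 2^((m+1)^2 + (m+1)) + 2^((K+1)^2) ≤ 2^((n+1)^2) := by
      have e1 : (m+1)^2 + (m+1) + 1 ≤ (n+1)^2 := exp_ineq h
      have e2 : (K+1)^2 ≤ (m+1)^2 + (m+1) := by nlinarith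
      calc 2^((m+1)^2 + (m+1)) + 2^((K+1)^2) ≤ 2^((m+1)^2 + (m+1)) + 2^((m+1)^2+(m+1)) :=
            by gcongr <;> norm_num
      _ = 2^((m+1)^2 + (m+1) + 1) := by ring
      _ ≤ 2^((n+1)^2) := Nat.pow_le_pow_right (by norm_num) e1
    have := pos_lower τ n
    omega
  · -- same level
    subst h
    have : 2^((K+1)^2) ≤ 2^((m+1)^2) := Nat.pow_le_pow_right (by norm_num) (by nlinarith)
    simp only [pos] at hlt ⊢
    have hv : val σ m + 1 < val τ m + 1 :=
      lt_of_mul_lt_mul_right hlt (Nat.zero_le _)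
    calc (val σ m + 1) * 2^((m+1)^2) + 2^((K+1)^2)
        ≤ (val σ m + 1) * 2^((m+1)^2) + 2^((m+1)^2) := by omega
      _ = (val σ m + 1 + 1) * 2^((m+1)^2) := by ring
      _ ≤ (val τ m + 1) * 2^((m+1)^2) := Nat.mul_le_mul_right _ (by omega)
  · exact absurd (pos_cross (σ := τ) (τ := σ) h) (by omega)

noncomputable section
open Finset

def term (σ : ℕ → Bool) (n : ℕ) : ℝ := (2:ℝ)⁻¹ ^ (pos σ n)

lemma term_pos (σ : ℕ → Bool) (n : ℕ) : 0 < term σ n := pow_pos (by norm_num) _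

lemma term_le_term {σ τ : ℕ → Bool} {m n : ℕ} (h : pos τ n ≤ pos σ m) :
    term σ m ≤ term τ n :=
  pow_le_pow_of_le_one (by norm_num) (by norm_num) h

lemma pos_ge (σ : ℕ → Bool) (n : ℕ) : n ≤ pos σ n := (pos_strictMono σ).le_apply

lemma summable_term (σ : ℕ → Bool) (k : ℕ) : Summable (fun n => term σ (n + k)) := by
  refine Summable.of_nonneg_of_le (fun n => (term_pos σ _).le) (fun n => ?_)
    (summable_geometric_of_lt_one (r := (2:ℝ)⁻¹) (by norm_num) (by norm_num))
  exact pow_le_pow_of_le_one (by norm_num) (by norm_num)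
    (le_trans (Nat.le_add_right n k) (pos_ge σ (n+k)))

def tail (σ : ℕ → Bool) (k : ℕ) : ℝ := ∑' n, term σ (n + k)

lemma tail_succ (σ : ℕ → Bool) (k : ℕ) : tail σ k = term σ k + tail σ (k+1) := by
  rw [tail, Summable.tsum_eq_zero_add (summable_term σ k)]
  congr 1
  · simp
  · rw [tail]
    exact tsum_congr fun n => by congr 1; omega

lemma pos_add_le (σ : ℕ → Bool) (k n : ℕ) : pos σ k + n ≤ pos σ (n + k) := by
  induction n with
  | zero => simp
  | succ n ih => have := pos_strictMono σ (show n + k < n+1+k by omega); omega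

lemma tail_le (σ : ℕ → Bool) (k : ℕ) : tail σ k ≤ 2 * term σ k := by
  have key : ∀ n, term σ (n + k) ≤ (2:ℝ)⁻¹ ^ n * term σ k := by
    intro n
    rw [term, term, ← pow_add]
    exact pow_le_pow_of_le_one (by norm_num) (by norm_num)
      (by have := pos_add_le σ k n; omega)
  calc tail σ k ≤ ∑' n, (2:ℝ)⁻¹ ^ n * term σ k :=
        Summable.tsum_le_tsum key (summable_term σ k)
          ((summable_geometric_of_lt_one (by norm_num) (by norm_num)).mul_right _)
    _ = (1 - (2:ℝ)⁻¹)⁻¹ * term σ k := by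
        rw [tsum_mul_right, tsum_geometric_of_lt_one (by norm_num) (by norm_num)]
    _ = 2 * term σ k := by norm_num

lemma tail_nonneg (σ : ℕ → Bool) (k : ℕ) : 0 ≤ tail σ k :=
  tsum_nonneg fun n => (term_pos σ _).le

lemma tail_eq_sum_add (σ : ℕ → Bool) (k : ℕ) :
    tail σ 0 = ∑ n ∈ Finset.range k, term σ n + tail σ k := by
  induction k with
  | zero => simp [tail]
  | succ k ih => rw [ih, tail_succ, Finset.sum_range_succ]; ring


open Classical in
def MM (t : Finset (ℕ → Bool)) (c : (ℕ → Bool) → ℤ) : ℝ := ∑ σ ∈ t, |(c σ : ℝ)|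

def Smix (t : Finset (ℕ → Bool)) (c : (ℕ → Bool) → ℤ) (start : (ℕ → Bool) → ℕ) : ℝ :=
  ∑ σ ∈ t, (c σ : ℝ) * tail σ (start σ)

lemma MM_nonneg (t : Finset (ℕ → Bool)) (c : (ℕ → Bool) → ℤ) : 0 ≤ MM t c :=
  Finset.sum_nonneg fun _ _ => abs_nonneg _

lemma claimA {t : Finset (ℕ → Bool)} {c : (ℕ → Bool) → ℤ} {start : (ℕ → Bool) → ℕ} {q : ℕ}
    (hq : ∀ σ ∈ t, q ≤ pos σ (start σ)) :
    |Smix t c start| ≤ 2 * MM t c * (2:ℝ)⁻¹ ^ q := by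
  calc |Smix t c start| ≤ ∑ σ ∈ t, |(c σ : ℝ) * tail σ (start σ)| :=
        Finset.abs_sum_le_sum_abs _ _
    _ ≤ ∑ σ ∈ t, |(c σ : ℝ)| * (2 * (2:ℝ)⁻¹ ^ q) := by
        apply Finset.sum_le_sum
        intro σ hσ
        rw [abs_mul, abs_of_nonneg (tail_nonneg σ _)]
        apply mul_le_mul_of_nonneg_left _ (abs_nonneg _)
        calc tail σ (start σ) ≤ 2 * term σ (start σ) := tail_le σ _
          _ ≤ 2 * (2:ℝ)⁻¹ ^ q := by
              apply mul_le_mul_of_nonneg_left _ (by norm_num)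
              exact pow_le_pow_of_le_one (by norm_num) (by norm_num) (hq σ hσ)
    _ = 2 * MM t c * (2:ℝ)⁻¹ ^ q := by rw [MM, ← Finset.sum_mul]; ring

open Classical in
lemma peel {t : Finset (ℕ → Bool)} {c : (ℕ → Bool) → ℤ} {start : (ℕ → Bool) → ℕ}
    {j : ℕ → Bool} (hj : j ∈ t) :
    Smix t c start = (c j : ℝ) * term j (start j)
      + Smix t c (Function.update start j (start j + 1)) := by
  rw [Smix, Smix, ← Finset.add_sum_erase _ _ hj, ← Finset.add_sum_erase _ _ hj,
    Function.update_self, tail_succ]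
  have : ∑ σ ∈ t.erase j, (c σ : ℝ) * tail σ (Function.update start j (start j + 1) σ)
      = ∑ σ ∈ t.erase j, (c σ : ℝ) * tail σ (start σ) :=
    Finset.sum_congr rfl fun σ hσ => by
      rw [Function.update_of_ne (Finset.ne_of_mem_erase hσ)]
  rw [this]
  ring

open Classical in
lemma claimB {t : Finset (ℕ → Bool)} {c : (ℕ → Bool) → ℤ} {start : (ℕ → Bool) → ℕ} {K : ℕ}
    (ht : t.Nonempty) (hc : ∀ σ ∈ t, c σ ≠ 0)
    (hstart : ∀ σ ∈ t, K ≤ start σ)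
    (hdist : ∀ σ ∈ t, ∀ τ ∈ t, σ ≠ τ → pos σ (start σ) ≠ pos τ (start τ))
    (hM : 2 * MM t c * (2:ℝ)⁻¹ ^ (2^((K+1)^2)) < 1) :
    Smix t c start ≠ 0 := by
  obtain ⟨j, hj, hmin⟩ := Finset.exists_min_image t (fun σ => pos σ (start σ)) ht
  set q : ℕ := pos j (start j) with hqdef
  set G : ℕ := 2^((K+1)^2) with hGdef
  set start' := Function.update start j (start j + 1) with hs'
  have hgap : ∀ σ ∈ t, q + G ≤ pos σ (start' σ) := by
    intro σ hσ
    by_cases hσj : σ = j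
    · subst hσj
      rw [hs', Function.update_self]
      exact pos_gap (hstart σ hσ) (le_trans (hstart σ hσ) (Nat.le_succ _))
        (Nat.ne_of_lt (pos_strictMono σ (Nat.lt_succ_self _)))
        (pos_strictMono σ (Nat.lt_succ_self _))
    · rw [hs', Function.update_of_ne hσj]
      have hne : pos j (start j) ≠ pos σ (start σ) := hdist j hj σ hσ (fun h => hσj h.symm)
      exact pos_gap (hstart j hj) (hstart σ hσ) hne
        (lt_of_le_of_ne (hmin σ hσ) hne)
  have hA : |Smix t c start'| ≤ 2 * MM t c * (2:ℝ)⁻¹ ^ (q + G) := claimA hgap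
  have hpeel := peel (c := c) (start := start) hj
  have hcj : (1:ℝ) ≤ |(c j : ℝ)| := by
    rw [← Int.cast_abs]
    exact_mod_cast Int.one_le_abs (hc j hj)
  have hterm : term j (start j) = (2:ℝ)⁻¹ ^ q := rfl
  intro h0
  rw [hpeel, hterm] at h0
  have h1 : |(c j : ℝ) * (2:ℝ)⁻¹ ^ q| = |Smix t c start'| := by
    rw [show (c j : ℝ) * (2:ℝ)⁻¹ ^ q = -Smix t c start' by linarith]
    rw [abs_neg]
  have h2 : (2:ℝ)⁻¹ ^ q ≤ |(c j : ℝ) * (2:ℝ)⁻¹ ^ q| := by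
    rw [abs_mul, abs_of_nonneg (by positivity : (0:ℝ) ≤ (2:ℝ)⁻¹ ^ q)]
    nlinarith [pow_pos (show (0:ℝ) < 2⁻¹ by norm_num) q]
  have h3 : 2 * MM t c * (2:ℝ)⁻¹ ^ (q + G) < (2:ℝ)⁻¹ ^ q := by
    rw [pow_add]
    have hp : (0:ℝ) < (2:ℝ)⁻¹ ^ q := by positivity
    nlinarith [MM_nonneg t c, pow_pos (show (0:ℝ) < 2⁻¹ by norm_num) G]
  linarith


lemma pow_cast_helper {e q : ℕ} (h : e ≤ q) :
    (2:ℝ) ^ q * (2:ℝ)⁻¹ ^ e = ((2 ^ (q - e) : ℕ) : ℝ) := by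
  push_cast
  rw [inv_pow, ← div_eq_mul_inv, div_eq_iff (by positivity), ← pow_add]
  congr 1
  omega

/-- separation: finite sets of distinct sequences have a common separation level -/
lemma exists_sep (t : Finset (ℕ → Bool)) :
    ∃ N : ℕ, ∀ σ ∈ t, ∀ τ ∈ t, σ ≠ τ → ∃ k ≤ N, σ k ≠ τ k := by
  classical
  refine ⟨(t ×ˢ t).sup (fun p => if h : p.1 = p.2 then 0
    else Nat.find (show ∃ k, p.1 k ≠ p.2 k by
      by_contra hq; push_neg at hq; exact h (funext hq))), ?_⟩
  intro σ hσ τ hτ hne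
  have hmem : (σ, τ) ∈ t ×ˢ t := Finset.mk_mem_product hσ hτ
  have hex : ∃ k, σ k ≠ τ k := by
    by_contra hq; push_neg at hq; exact hne (funext hq)
  refine ⟨Nat.find hex, ?_, Nat.find_spec hex⟩
  have := Finset.le_sup (f := fun p : (ℕ → Bool) × (ℕ → Bool) =>
    if h : p.1 = p.2 then 0 else Nat.find (show ∃ k, p.1 k ≠ p.2 k by
      by_contra hq; push_neg at hq; exact h (funext hq))) hmem
  simpa [dif_neg hne] using this

lemma core (t : Finset (ℕ → Bool)) (ht : t.Nonempty) (c : (ℕ → Bool) → ℤ)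
    (hc : ∀ σ ∈ t, c σ ≠ 0) : ∑ σ ∈ t, (c σ : ℝ) * tail σ 0 ≠ 0 := by
  classical
  obtain ⟨N0, hsep⟩ := exists_sep t
  set Mn : ℕ := ∑ σ ∈ t, (c σ).natAbs with hMn
  have hMM : MM t c = (Mn : ℝ) := by
    rw [MM, hMn]
    push_cast
    exact Finset.sum_congr rfl fun σ _ => by rw [Nat.cast_natAbs, Int.cast_abs]
  set N' : ℕ := max N0 Mn with hN'
  set G : ℕ := 2^((N'+1)^2) with hG
  -- size bound
  have hMbound : 2 * MM t c * (2:ℝ)⁻¹ ^ G < 1 := by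
    rw [hMM]
    have h1 : 2 * Mn < 2 ^ G := by
      have g1 : Mn < 2 ^ Mn := Nat.lt_two_pow_self
      have g2 : Mn + 1 ≤ G := by
        have : N' + 1 ≤ 2^((N'+1)^2) := le_trans (by nlinarith) (Nat.lt_two_pow_self (n := (N'+1)^2)).le
        have : Mn + 1 ≤ N' + 1 := by omega
        omega
      calc 2 * Mn < 2 * 2 ^ Mn := by omega
        _ = 2 ^ (Mn + 1) := by ring
        _ ≤ 2 ^ G := Nat.pow_le_pow_right (by norm_num) g2
    have h2 : (2:ℝ) * Mn < 2 ^ G := by exact_mod_cast h1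
    have h3 : (0:ℝ) < 2 ^ G := by positivity
    rw [inv_pow, ← div_eq_mul_inv, div_lt_one h3]
    exact h2
  intro h0
  have hval : ∀ σ ∈ t, ∀ τ ∈ t, σ ≠ τ → val σ N' ≠ val τ N' := by
    intro σ hσ τ hτ hne hv
    obtain ⟨k, hk, hkne⟩ := hsep σ hσ τ hτ hne
    exact hkne (val_inj hv k (le_trans hk (le_max_left N0 Mn)))
  have hdistN : ∀ σ ∈ t, ∀ τ ∈ t, σ ≠ τ → pos σ N' ≠ pos τ N' :=
    fun σ hσ τ hτ hne => pos_same_level_ne (hval σ hσ τ hτ hne)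
  have hsplit : ∑ σ ∈ t, (c σ : ℝ) * tail σ 0
      = (∑ σ ∈ t, (c σ : ℝ) * ∑ n ∈ Finset.range N', term σ n) + Smix t c (fun _ => N') := by
    rw [Smix, ← Finset.sum_add_distrib]
    exact Finset.sum_congr rfl fun σ _ => by rw [tail_eq_sum_add σ N']; ring
  set L : ℝ := ∑ σ ∈ t, (c σ : ℝ) * ∑ n ∈ Finset.range N', term σ n with hL
  obtain ⟨j, hj, hmin⟩ := Finset.exists_min_image t (fun σ => pos σ N') ht
  set q : ℕ := pos j N' with hq
  set start' := Function.update (fun _ : ℕ → Bool => N') j (N' + 1) with hs'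
  have hpeel : Smix t c (fun _ => N') = (c j : ℝ) * term j N' + Smix t c start' := peel hj
  have hstart' : ∀ σ ∈ t, N' ≤ start' σ := by
    intro σ hσ
    by_cases h : σ = j
    · subst h; rw [hs', Function.update_self]; omega
    · rw [hs', Function.update_of_ne h]
  have hdist' : ∀ σ ∈ t, ∀ τ ∈ t, σ ≠ τ → pos σ (start' σ) ≠ pos τ (start' τ) := by
    intro σ hσ τ hτ hne
    by_cases h1 : σ = j
    · subst h1
      rw [hs', Function.update_self, Function.update_of_ne (fun h => hne h.symm)]
      exact Nat.ne_of_gt (pos_cross (Nat.lt_succ_self N'))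
    · by_cases h2 : τ = j
      · subst h2
        rw [hs', Function.update_self, Function.update_of_ne h1]
        exact Nat.ne_of_lt (pos_cross (Nat.lt_succ_self N'))
      · rw [hs', Function.update_of_ne h1, Function.update_of_ne h2]
        exact hdistN σ hσ τ hτ hne
  have hgap' : ∀ σ ∈ t, q + G ≤ pos σ (start' σ) := by
    intro σ hσ
    by_cases h : σ = j
    · subst h
      rw [hs', Function.update_self]
      exact pos_gap le_rfl (Nat.le_succ _)
        (Nat.ne_of_lt (pos_strictMono σ (Nat.lt_succ_self _)))
        (pos_strictMono σ (Nat.lt_succ_self _))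
    · rw [hs', Function.update_of_ne h]
      have hne : pos j N' ≠ pos σ N' := hdistN j hj σ hσ (fun hh => h hh.symm)
      exact pos_gap le_rfl le_rfl hne (lt_of_le_of_ne (hmin σ hσ) hne)
  have hA : |Smix t c start'| ≤ 2 * MM t c * (2:ℝ)⁻¹ ^ (q + G) := claimA hgap'
  have hB : Smix t c start' ≠ 0 := claimB ht hc hstart' hdist' hMbound
  -- integrality of 2^q * L
  set z : ℤ := ∑ σ ∈ t, c σ * ∑ n ∈ Finset.range N', (2:ℤ) ^ (q - pos σ n) with hz
  have hzL : (2:ℝ) ^ q * L = (z : ℝ) := by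
    rw [hL, hz, Finset.mul_sum]
    push_cast
    refine Finset.sum_congr rfl fun σ hσ => ?_
    rw [Finset.mul_sum, Finset.mul_sum, Finset.mul_sum]
    refine Finset.sum_congr rfl fun n hn => ?_
    have hlt : pos σ n < q := hq ▸ pos_cross (Finset.mem_range.mp hn)
    have := pow_cast_helper hlt.le (q := q)
    push_cast at this
    rw [term]
    calc (2:ℝ) ^ q * ((c σ : ℝ) * (2:ℝ)⁻¹ ^ (pos σ n))
        = (c σ : ℝ) * ((2:ℝ) ^ q * (2:ℝ)⁻¹ ^ (pos σ n)) := by ring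
      _ = (c σ : ℝ) * (2:ℝ) ^ (q - pos σ n) := by rw [this]
  -- put it together
  have hone : (2:ℝ) ^ q * (2:ℝ)⁻¹ ^ q = 1 := by
    rw [← mul_pow]; norm_num
  have hterm : term j N' = (2:ℝ)⁻¹ ^ q := rfl
  have hx : (2:ℝ) ^ q * Smix t c start' = -((z : ℝ) + (c j : ℝ)) := by
    rw [hsplit, hpeel, hterm] at h0
    have : (2:ℝ) ^ q * (L + ((c j : ℝ) * (2:ℝ)⁻¹ ^ q + Smix t c start')) = 0 := by
      rw [h0, mul_zero]
    rw [mul_add, mul_add, hzL] at this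
    have h2 : (2:ℝ) ^ q * ((c j : ℝ) * (2:ℝ)⁻¹ ^ q) = (c j : ℝ) := by
      calc (2:ℝ) ^ q * ((c j : ℝ) * (2:ℝ)⁻¹ ^ q)
          = (c j : ℝ) * ((2:ℝ) ^ q * (2:ℝ)⁻¹ ^ q) := by ring
        _ = (c j : ℝ) := by rw [hone]; ring
    rw [h2] at this
    linarith
  have hxne : (2:ℝ) ^ q * Smix t c start' ≠ 0 :=
    mul_ne_zero (by positivity) hB
  have hwne : z + c j ≠ 0 := by
    intro hw
    apply hxne
    rw [hx]
    rw [← Int.cast_add, hw]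
    simp
  have hge1 : (1:ℝ) ≤ |(2:ℝ) ^ q * Smix t c start'| := by
    rw [hx, abs_neg, ← Int.cast_add, ← Int.cast_abs]
    exact_mod_cast Int.one_le_abs hwne
  have hlt1 : |(2:ℝ) ^ q * Smix t c start'| < 1 := by
    rw [abs_mul, abs_of_nonneg (by positivity : (0:ℝ) ≤ (2:ℝ) ^ q)]
    calc (2:ℝ) ^ q * |Smix t c start'| ≤ (2:ℝ) ^ q * (2 * MM t c * (2:ℝ)⁻¹ ^ (q + G)) := by
          apply mul_le_mul_of_nonneg_left hA (by positivity)
      _ = 2 * MM t c * (2:ℝ)⁻¹ ^ G := by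
          rw [pow_add]
          calc (2:ℝ) ^ q * (2 * MM t c * ((2:ℝ)⁻¹ ^ q * (2:ℝ)⁻¹ ^ G))
              = 2 * MM t c * (2:ℝ)⁻¹ ^ G * ((2:ℝ) ^ q * (2:ℝ)⁻¹ ^ q) := by ring
            _ = 2 * MM t c * (2:ℝ)⁻¹ ^ G := by rw [hone]; ring
      _ < 1 := hMbound
  linarith


def f (σ : ℕ → Bool) : ℝ := tail σ 0

lemma rat_mul_den (q : ℚ) : q * (q.den : ℚ) = (q.num : ℚ) := by
  nth_rewrite 1 [← Rat.num_div_den q]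
  rw [div_mul_cancel₀]
  exact Nat.cast_ne_zero.mpr q.den_nz

lemma linIndep : LinearIndependent ℚ f := by
  rw [linearIndependent_iff']
  intro s g hsum σ0 hσ0
  by_contra hne
  classical
  set t := s.filter (fun σ => g σ ≠ 0) with htdef
  have htne : t.Nonempty := ⟨σ0, Finset.mem_filter.mpr ⟨hσ0, hne⟩⟩
  have hsum' : ∑ σ ∈ t, (g σ : ℝ) * tail σ 0 = 0 := by
    rw [← hsum]
    rw [htdef]
    rw [Finset.sum_filter]
    refine Finset.sum_congr rfl fun σ _ => ?_
    by_cases h : g σ = 0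
    · simp [h]
    · simp [h, f, Rat.smul_def]
  set d : ℕ := ∏ σ ∈ t, (g σ).den with hd
  have hdvd : ∀ σ ∈ t, (g σ).den ∣ d := fun σ hσ => Finset.dvd_prod_of_mem _ hσ
  have hdpos : 0 < d := Finset.prod_pos (fun σ _ => (g σ).pos)
  set c : (ℕ → Bool) → ℤ := fun σ => (g σ).num * (d / (g σ).den : ℕ) with hc
  have hcast : ∀ σ ∈ t, ((c σ : ℚ)) = g σ * d := by
    intro σ hσ
    have h2 : ((d / (g σ).den : ℕ) : ℚ) * ((g σ).den : ℚ) = (d : ℚ) := by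
      rw [← Nat.cast_mul, Nat.div_mul_cancel (hdvd σ hσ)]
    calc (c σ : ℚ) = ((g σ).num : ℚ) * ((d / (g σ).den : ℕ) : ℚ) := by rw [hc, Int.cast_mul, Int.cast_natCast]
      _ = (g σ * ((g σ).den : ℚ)) * ((d / (g σ).den : ℕ) : ℚ) := by rw [rat_mul_den]
      _ = g σ * (((d / (g σ).den : ℕ) : ℚ) * ((g σ).den : ℚ)) := by ring
      _ = g σ * d := by rw [h2]
  have hcne : ∀ σ ∈ t, c σ ≠ 0 := by
    intro σ hσ
    rw [hc]
    apply mul_ne_zero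
    · exact Rat.num_ne_zero.mpr (Finset.mem_filter.mp hσ).2
    · have : 0 < d / (g σ).den := Nat.div_pos (Nat.le_of_dvd hdpos (hdvd σ hσ)) (g σ).pos
      exact_mod_cast this.ne'
  have := core t htne c hcne
  apply this
  have : ∀ σ ∈ t, (c σ : ℝ) * tail σ 0 = (d : ℝ) * ((g σ : ℝ) * tail σ 0) := by
    intro σ hσ
    have h1 : ((c σ : ℚ) : ℝ) = ((g σ * d : ℚ) : ℝ) := by rw [hcast σ hσ]
    push_cast at h1
    rw [show ((c σ : ℤ) : ℝ) = ((g σ : ℝ)) * (d : ℝ) from h1]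
    ring
  rw [Finset.sum_congr rfl this, ← Finset.mul_sum, hsum', mul_zero]

lemma f_injective : Function.Injective f := LinearIndependent.injective linIndep

lemma linIndepRange : LinearIndependent ℚ ((↑) : Set.range f → ℝ) :=
  (linearIndepOn_id_range_iff f_injective).mpr linIndep


lemma term_norm_le (σ : ℕ → Bool) (n : ℕ) : ‖term σ n‖ ≤ (2:ℝ)⁻¹ ^ n := by
  rw [Real.norm_eq_abs, abs_of_pos (term_pos σ n)]
  exact pow_le_pow_of_le_one (by norm_num) (by norm_num) (pos_ge σ n)

lemma continuous_f : Continuous f := by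
  have hfeq : f = fun σ => ∑' n, term σ n := by
    funext σ
    rw [f, tail]
    exact tsum_congr fun n => by rw [Nat.add_zero]
  rw [hfeq]
  apply continuous_tsum ?_
    (summable_geometric_of_lt_one (r := (2:ℝ)⁻¹) (by norm_num) (by norm_num))
    (fun n σ => term_norm_le σ n)
  intro n
  have hval : Continuous fun σ : ℕ → Bool => val σ n := by
    apply continuous_finset_sum
    intro k _
    exact (continuous_of_discreteTopology
      (f := fun b : Bool => bif b then 2^k else 0)).comp (continuous_apply k)
  have hpos : Continuous fun σ : ℕ → Bool => pos σ n :=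
    (continuous_of_discreteTopology
      (f := fun v : ℕ => (v + 1) * 2^((n+1)^2))).comp hval
  show Continuous fun σ : ℕ → Bool => (2:ℝ)⁻¹ ^ pos σ n
  exact (continuous_of_discreteTopology (f := fun m : ℕ => (2:ℝ)⁻¹ ^ m)).comp hpos

def P : Set ℝ := Set.range f

lemma P_compact : IsCompact P := isCompact_range continuous_f

lemma P_preperfect : Preperfect P := by
  rw [preperfect_iff_nhds]
  rintro x ⟨σ, rfl⟩ U hU
  classical
  set σn : ℕ → (ℕ → Bool) := fun n => Function.update σ n (!σ n) with hσn
  have htend : Filter.Tendsto σn Filter.atTop (nhds σ) := by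
    rw [tendsto_pi_nhds]
    intro k
    refine Filter.Tendsto.congr' ?_ tendsto_const_nhds
    filter_upwards [Filter.eventually_gt_atTop k] with n hn
    exact (Function.update_of_ne (by omega) _ _).symm
  have hcomp : Filter.Tendsto (fun n => f (σn n)) Filter.atTop (nhds (f σ)) :=
    (continuous_f.tendsto σ).comp htend
  have hUev : ∀ᶠ n in Filter.atTop, f (σn n) ∈ U := hcomp (hU)
  obtain ⟨n, hn⟩ := hUev.exists
  refine ⟨f (σn n), ⟨hn, ⟨σn n, rfl⟩⟩, ?_⟩
  intro he
  have heq : σn n = σ := f_injective he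
  have := congrFun heq n
  rw [hσn] at this
  simp only [Function.update_self] at this
  exact (Bool.not_ne_self (σ n)) this

lemma P_perfect : Perfect P := ⟨P_compact.isClosed, P_preperfect⟩

lemma P_nonempty : P.Nonempty := ⟨f (fun _ => false), Set.mem_range_self _⟩

end
end Stmt2

theorem stmt_2 :
    ∃ P : Set ℝ, P.Nonempty ∧ Perfect P ∧ LinearIndependent ℚ ((↑) : P → ℝ) :=
  ⟨Stmt2.P, Stmt2.P_nonempty, Stmt2.P_perfect, Stmt2.linIndepRange⟩
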